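/- Let (Ω, ℱ, P) be a probability space with a filtration {∅,Ω} = ℱ₀ ⊆ ℱ₁ ⊆ ⋯ ⊆ ℱ_k, let Z be a square-integrable ℱ_k-measurable random variable with E Z = μ, and set Z_i := E(Z | ℱ_i) for i = 0,…,k. For δ, γ ≥ 0 define the event A(δ,γ) := {Σ_{i=1}^k Var(Z_i | ℱ_{i−1}) ≤ δ} ∩ {|Z_i − Z_{i−1}| ≤ γ for all 1 ≤ i ≤ k}. Then for any m ≥ 0 and any δ, γ ≥ 0: P({|Z − μ| ≥ m} ∩ A(δ,γ)) ≤ 2·exp(−m² / (2δ + 2γm/3)). In particular, if Σ_{i=1}^k Var(Z_i | ℱ_{i−1}) ≤ δ a.s. and |Z_i − Z_{i−1}| ≤ γ a.s. for all i, then P(|Z − μ| ≥ m) ≤ 2·exp(−m² / (2δ + 2γm/3)). -/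

import Mathlib

open MeasureTheory Real Filter

namespace FreedmanAux


lemma nonneg_of_deriv (f f' : ℝ → ℝ) (hder : ∀ x, HasDerivAt f (f' x) x) (h0 : f 0 = 0)
    (hf' : ∀ x, 0 ≤ x → 0 ≤ f' x) : ∀ x, 0 ≤ x → 0 ≤ f x := by
  intro x hx
  have hmono : MonotoneOn f (Set.Ici 0) := by
    apply monotoneOn_of_deriv_nonneg (convex_Ici 0)
    · exact fun y _ => (hder y).differentiableAt.continuousAt.continuousWithinAt
    · intro y hy
      exact (hder y).differentiableAt.differentiableWithinAt
    · intro y hy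
      rw [(hder y).deriv]
      rw [interior_Ici] at hy
      exact hf' y (le_of_lt hy)
  calc (0:ℝ) = f 0 := h0.symm
  _ ≤ f x := hmono Set.self_mem_Ici hx hx

lemma exp_le_quad_neg {u : ℝ} (hu : u ≤ 0) : Real.exp u ≤ 1 + u + u^2/2 := by
  have key : ∀ x, 0 ≤ x → 0 ≤ 1 + (-x) + (-x)^2/2 - Real.exp (-x) := by
    apply nonneg_of_deriv _ (fun x => Real.exp (-x) - 1 + x)
    · intro x
      have h1 : HasDerivAt (fun x : ℝ => 1 + (-x) + (-x)^2/2 - Real.exp (-x))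
          (0 + (-1) + (2 * (-x)^1 * (-1))/2 - (Real.exp (-x) * (-1))) x := by
        have hneg : HasDerivAt (fun x : ℝ => -x) (-1) x := (hasDerivAt_id x).neg.congr_deriv (by ring)
        exact (((hasDerivAt_const x (1:ℝ)).add hneg).add
          (((hneg.pow 2)).div_const 2)).sub (Real.hasDerivAt_exp (-x) |>.comp x hneg)
      convert h1 using 1
      ring
    · norm_num
    · intro x hx
      have := Real.add_one_le_exp (-x)
      linarith
  have := key (-u) (by linarith)
  simp only [neg_neg] at this
  linarith



lemma G_nonneg : ∀ x : ℝ, 0 ≤ x → 0 ≤ 2 - 2*Real.exp x + 2*x*Real.exp x := by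
  apply nonneg_of_deriv _ (fun x => 2*x*Real.exp x)
  · intro x
    have h1 : HasDerivAt (fun u : ℝ => 2 - 2*Real.exp u + 2*u*Real.exp u)
        (0 - 2*Real.exp x + ((2*1) * Real.exp x + (2*x) * Real.exp x)) x := by
      exact ((hasDerivAt_const x (2:ℝ)).sub ((Real.hasDerivAt_exp x).const_mul 2)).add
        (((hasDerivAt_id x).const_mul 2).mul (Real.hasDerivAt_exp x))
    convert h1 using 1
    ring
  · norm_num
  · intro x hx
    positivity

lemma F1_nonneg : ∀ x : ℝ, 0 ≤ x → 0 ≤ 2*x + 4 - 4*Real.exp x + 2*x*Real.exp x := by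
  apply nonneg_of_deriv _ (fun x => 2 - 2*Real.exp x + 2*x*Real.exp x)
  · intro x
    have h1 : HasDerivAt (fun u : ℝ => 2*u + 4 - 4*Real.exp u + 2*u*Real.exp u)
        (2*1 - 4*Real.exp x + ((2*1) * Real.exp x + (2*x) * Real.exp x)) x := by
      exact ((((hasDerivAt_id x).const_mul 2).add_const 4).sub
        ((Real.hasDerivAt_exp x).const_mul 4)).add
        (((hasDerivAt_id x).const_mul 2).mul (Real.hasDerivAt_exp x))
    convert h1 using 1
    ring
  · norm_num
  · exact G_nonneg

lemma F_nonneg : ∀ x : ℝ, 0 ≤ x → 0 ≤ 3*x^2 - 2*(3-x)*(Real.exp x - 1 - x) := by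
  apply nonneg_of_deriv _ (fun x => 2*x + 4 - 4*Real.exp x + 2*x*Real.exp x)
  · intro x
    have h2 : HasDerivAt (fun u : ℝ => 2*(3-u)) (2*(0-1)) x :=
      ((hasDerivAt_const x (3:ℝ)).sub (hasDerivAt_id x)).const_mul 2
    have h3 : HasDerivAt (fun u : ℝ => Real.exp u - 1 - u) (Real.exp x - 1) x :=
      ((Real.hasDerivAt_exp x).sub_const 1).sub (hasDerivAt_id x)
    have h1 : HasDerivAt (fun u : ℝ => 3*u^2 - 2*(3-u)*(Real.exp u - 1 - u))
        (3*(2*x^1) - ((2*(0-1)) * (Real.exp x - 1 - x) + (2*(3-x)) * (Real.exp x - 1))) x := by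
      exact ((hasDerivAt_pow 2 x).const_mul 3).sub (h2.mul h3)
    convert h1 using 1
    ring
  · norm_num
  · exact F1_nonneg

lemma exp_le_quad {a u : ℝ} (ha0 : 0 < a) (ha3 : a < 3) (hu : u ≤ a) :
    Real.exp u ≤ 1 + u + u^2 * (3/(2*(3-a))) := by
  have hca : (1:ℝ)/2 ≤ 3/(2*(3-a)) := by
    rw [div_le_div_iff₀ (by norm_num) (by linarith)]
    nlinarith
  rcases le_or_gt u 0 with h | h
  · have h1 := exp_le_quad_neg h
    nlinarith [sq_nonneg u]
  · have hF := F_nonneg u h.le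
    have hu3 : u < 3 := lt_of_le_of_lt hu ha3
    have hd : (0:ℝ) < 2*(3-u) := by linarith
    have key : u^2 * (3/(2*(3-u))) = 3*u^2/(2*(3-u)) := by ring
    have h2 : Real.exp u - 1 - u ≤ 3*u^2/(2*(3-u)) := (le_div_iff₀ hd).2 (by nlinarith)
    have h3 : u^2*(3/(2*(3-u))) ≤ u^2*(3/(2*(3-a))) := by
      apply mul_le_mul_of_nonneg_left _ (sq_nonneg u)
      exact div_le_div_of_nonneg_left (by norm_num) (by linarith) (by linarith)
    linarith



lemma memℒp_two_condexp {α : Type*} {m m0 : MeasurableSpace α} {μ : Measure α}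
    [IsProbabilityMeasure μ] (hm : m ≤ m0) {f : α → ℝ} (hf : MemLp f 2 μ) :
    MemLp (μ[f|m]) 2 μ := by
  haveI : SigmaFinite (μ.trim hm) := inferInstance
  set g : Lp ℝ 2 μ := (condExpL2 ℝ ℝ hm (hf.toLp f) : Lp ℝ 2 μ) with hg
  have hgmem : MemLp (g : α → ℝ) 2 μ := Lp.memLp g
  have heq : (g : α → ℝ) =ᵐ[μ] μ[f|m] := by
    apply ae_eq_condExp_of_forall_setIntegral_eq hm (hf.integrable one_le_two)
    · intro s _ _
      exact (hgmem.integrable one_le_two).integrableOn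
    · intro s hs hμs
      rw [integral_condExpL2_eq hm (hf.toLp f) hs hμs.ne]
      exact setIntegral_congr_ae (hm s hs) ((hf.coeFn_toLp).mono fun x hx _ => hx)
    · exact lpMeas.aestronglyMeasurable (condExpL2 ℝ ℝ hm (hf.toLp f))
  exact hgmem.ae_eq heq



lemma sum_Icc_sub (f : ℕ → ℝ) (k : ℕ) :
    ∑ i ∈ Finset.Icc 1 k, (f i - f (i-1)) = f k - f 0 := by
  induction k with
  | zero => simp
  | succ n ih =>
    rw [Finset.sum_Icc_succ_top (Nat.le_add_left 1 n), ih]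
    simp



lemma oneSided {Ω : Type*} [m0 : MeasurableSpace Ω] (P : Measure Ω) [IsProbabilityMeasure P]
    (k : ℕ) (F : ℕ → MeasurableSpace Ω)
    (hFmono : ∀ i j, i ≤ j → j ≤ k → F i ≤ F j)
    (hFle : ∀ i ≤ k, F i ≤ m0)
    (Zi : ℕ → Ω → ℝ)
    (hZiM : ∀ i ≤ k, StronglyMeasurable[F i] (Zi i))
    (hZi2 : ∀ i ≤ k, MemLp (Zi i) 2 P)
    (hmart : ∀ i, 1 ≤ i → i ≤ k → P[Zi i | F (i-1)] =ᵐ[P] Zi (i-1))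
    (CV : ℕ → Ω → ℝ)
    (hCVM : ∀ i, 1 ≤ i → i ≤ k → StronglyMeasurable[F (i-1)] (CV i))
    (hCVeq : ∀ i, 1 ≤ i → i ≤ k →
      CV i =ᵐ[P] P[(fun ω => (Zi i ω - Zi (i-1) ω)^2) | F (i-1)])
    (μ : ℝ) (hZi0 : ∀ ω, Zi 0 ω = μ)
    (m δ γ : ℝ) (hm : 0 < m) (hδ : 0 < δ) (hγ : 0 < γ) :
    P ({ω | m ≤ Zi k ω - μ} ∩
        ({ω | ∑ i ∈ Finset.Icc 1 k, CV i ω ≤ δ} ∩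
         {ω | ∀ i, 1 ≤ i → i ≤ k → |Zi i ω - Zi (i-1) ω| ≤ γ}))
      ≤ ENNReal.ofReal (Real.exp (-(m ^ 2) / (2 * δ + 2 * γ * m / 3))) := by
  have hden : (0:ℝ) < 3*δ+γ*m := by positivity
  set L : ℝ := 3*m/(3*δ+γ*m) with hLdef
  have hLpos : 0 < L := by positivity
  have hapos : 0 < L*γ := by positivity
  have ha3 : L*γ < 3 := by
    rw [hLdef, div_mul_eq_mul_div, div_lt_iff₀ hden]
    nlinarith
  set c : ℝ := 3/(2*(3-L*γ)) with hcdef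
  have hcpos : 0 < c := by
    have h3 : (0:ℝ) < 3 - L*γ := by linarith
    rw [hcdef]; positivity
  set D : ℕ → Ω → ℝ := fun i ω => Zi i ω - Zi (i-1) ω with hDdef
  set g : ℕ → Ω → ℝ := fun i ω => Real.exp (L * min (D i ω) γ - c*L^2 * max (CV i ω) 0)
    with hgdef
  -- pointwise bounds on g
  have hgpos : ∀ i ω, 0 < g i ω := fun i ω => Real.exp_pos _
  have hgle : ∀ i ω, g i ω ≤ Real.exp (L*γ) := by
    intro i ω
    apply Real.exp_le_exp.2
    have h1 : L * min (D i ω) γ ≤ L*γ :=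
      mul_le_mul_of_nonneg_left (min_le_right _ _) hLpos.le
    have h2 : 0 ≤ c*L^2 * max (CV i ω) 0 :=
      mul_nonneg (by positivity) (le_max_right _ _)
    linarith
  -- key quadratic bound
  have hquad : ∀ x : ℝ, Real.exp (L * min x γ) ≤ 1 + L*x + c*L^2*x^2 := by
    intro x
    rcases le_or_gt x γ with h | h
    · rw [min_eq_left h]
      have h1 := exp_le_quad hapos ha3 (mul_le_mul_of_nonneg_left h hLpos.le)
      calc Real.exp (L*x) ≤ 1 + L*x + (L*x)^2 * (3/(2*(3-L*γ))) := h1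
      _ = 1 + L*x + c*L^2*x^2 := by rw [hcdef]; ring
    · rw [min_eq_right h.le]
      have h1 := exp_le_quad hapos ha3 (le_refl (L*γ))
      calc Real.exp (L*γ) ≤ 1 + L*γ + (L*γ)^2 * (3/(2*(3-L*γ))) := h1
      _ = 1 + L*γ + c*L^2*γ^2 := by rw [hcdef]; ring
      _ ≤ 1 + L*x + c*L^2*x^2 := by
          have e1 : L*γ ≤ L*x := mul_le_mul_of_nonneg_left h.le hLpos.le
          have e2 : γ^2 ≤ x^2 := by nlinarith
          have e3 : c*L^2*γ^2 ≤ c*L^2*x^2 := mul_le_mul_of_nonneg_left e2 (by positivity)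
          linarith
  -- measurability
  have hDM : ∀ i, 1 ≤ i → i ≤ k → StronglyMeasurable[F i] (D i) := by
    intro i h1 hk
    exact (hZiM i hk).sub ((hZiM (i-1) (le_trans (Nat.sub_le i 1) hk)).mono
      (hFmono (i-1) i (Nat.sub_le i 1) hk))
  have hgM : ∀ i, 1 ≤ i → i ≤ k → StronglyMeasurable[F i] (g i) := by
    intro i h1 hk
    have hCVi : Measurable[F i] (CV i) :=
      ((hCVM i h1 hk).mono (hFmono _ _ (Nat.sub_le i 1) hk)).measurable
    have hDi : Measurable[F i] (D i) := (hDM i h1 hk).measurable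
    exact (Real.measurable_exp.comp
      (((hDi.min measurable_const).const_mul L).sub
        ((hCVi.max measurable_const).const_mul (c*L^2)))).stronglyMeasurable
  -- integrability of g i
  have hgInt : ∀ i, 1 ≤ i → i ≤ k → Integrable (g i) P := by
    intro i h1 hk
    refine Integrable.mono' (integrable_const (Real.exp (L*γ)))
      ((hgM i h1 hk).mono (hFle i hk)).aestronglyMeasurable
      (Eventually.of_forall fun ω => ?_)
    rw [Real.norm_eq_abs, abs_of_pos (hgpos i ω)]
    exact hgle i ω
  -- integrability of D and D²
  have hZiInt : ∀ i ≤ k, Integrable (Zi i) P := fun i hi => (hZi2 i hi).integrable one_le_two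
  have hD2 : ∀ i, 1 ≤ i → i ≤ k → MemLp (D i) 2 P := by
    intro i h1 hk
    exact (hZi2 i hk).sub (hZi2 (i-1) (le_trans (Nat.sub_le i 1) hk))
  have hDInt : ∀ i, 1 ≤ i → i ≤ k → Integrable (D i) P :=
    fun i h1 hk => (hD2 i h1 hk).integrable one_le_two
  have hDsqInt : ∀ i, 1 ≤ i → i ≤ k → Integrable (fun ω => (D i ω)^2) P :=
    fun i h1 hk => (hD2 i h1 hk).integrable_sq
  -- per-step conditional bound
  have hstep : ∀ i, 1 ≤ i → i ≤ k → (P[g i | F (i-1)]) ≤ᵐ[P] fun _ => (1:ℝ) := by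
    intro i h1 hk
    have hik1 : i - 1 ≤ k := le_trans (Nat.sub_le i 1) hk
    have hG : F (i-1) ≤ m0 := hFle _ hik1
    have hmart0 : P[D i | F (i-1)] =ᵐ[P] fun _ => (0:ℝ) := by
      have hsub : P[D i | F (i-1)] =ᵐ[P] P[Zi i | F (i-1)] - P[Zi (i-1) | F (i-1)] :=
        condExp_sub (hZiInt i hk) (hZiInt (i-1) hik1) _
      have hself : P[Zi (i-1) | F (i-1)] = Zi (i-1) :=
        condExp_of_stronglyMeasurable hG (hZiM (i-1) hik1) (hZiInt (i-1) hik1)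
      filter_upwards [hsub, hmart i h1 hk] with ω hω hmω
      rw [hω, Pi.sub_apply, hself, hmω, sub_self]
    set φ : Ω → ℝ := fun ω => Real.exp (L * min (D i ω) γ) with hφdef
    have hφInt : Integrable φ P := by
      refine Integrable.mono' (integrable_const (Real.exp (L*γ)))
        (((Real.measurable_exp.comp
          (((hDM i h1 hk).measurable.min measurable_const).const_mul L)).stronglyMeasurable.mono
            (hFle i hk)).aestronglyMeasurable)
        (Eventually.of_forall fun ω => ?_)
      rw [Real.norm_eq_abs, abs_of_pos (Real.exp_pos _)]
      exact Real.exp_le_exp.2 (mul_le_mul_of_nonneg_left (min_le_right _ _) hLpos.le)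
    set ψ : Ω → ℝ := (fun _ => (1:ℝ)) + (L • D i) + ((c*L^2) • fun ω => (D i ω)^2) with hψdef
    have hψ1Int : Integrable ((fun _ => (1:ℝ)) + (L • D i)) P :=
      (integrable_const 1).add ((hDInt i h1 hk).smul L)
    have hψ2Int : Integrable ((c*L^2) • fun ω => (D i ω)^2) P :=
      (hDsqInt i h1 hk).smul (c*L^2)
    have hψInt : Integrable ψ P := hψ1Int.add hψ2Int
    have hmono : P[φ | F (i-1)] ≤ᵐ[P] P[ψ | F (i-1)] := by
      refine condExp_mono hφInt hψInt (Eventually.of_forall fun ω => ?_)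
      have := hquad (D i ω)
      simp only [hψdef, Pi.add_apply, Pi.smul_apply, smul_eq_mul]
      exact this
    have hlin : P[ψ | F (i-1)] =ᵐ[P]
        fun ω => 1 + L * (P[D i | F (i-1)]) ω
          + c*L^2 * (P[fun ω => (D i ω)^2 | F (i-1)]) ω := by
      have e1 : P[ψ | F (i-1)] =ᵐ[P]
          P[(fun _ => (1:ℝ)) + (L • D i) | F (i-1)]
            + P[(c*L^2) • fun ω => (D i ω)^2 | F (i-1)] := condExp_add hψ1Int hψ2Int _
      have e2 : P[(fun _ => (1:ℝ)) + (L • D i) | F (i-1)] =ᵐ[P]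
          P[(fun _ => (1:ℝ)) | F (i-1)] + P[L • D i | F (i-1)] :=
        condExp_add (integrable_const 1) ((hDInt i h1 hk).smul L) _
      have e3 : P[(fun _ => (1:ℝ)) | F (i-1)] = fun _ => (1:ℝ) := condExp_const hG 1
      have e4 : P[L • D i | F (i-1)] =ᵐ[P] L • P[D i | F (i-1)] := condExp_smul L (D i) _
      have e5 : P[(c*L^2) • fun ω => (D i ω)^2 | F (i-1)] =ᵐ[P]
          (c*L^2) • P[fun ω => (D i ω)^2 | F (i-1)] := condExp_smul (c*L^2) _ _
      filter_upwards [e1, e2, e4, e5] with ω w1 w2 w4 w5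
      simp only [w1, Pi.add_apply, w2, w4, w5, e3, Pi.smul_apply, smul_eq_mul]
    have hCVD : CV i =ᵐ[P] P[fun ω => (D i ω)^2 | F (i-1)] := hCVeq i h1 hk
    have hCVnn : ∀ᵐ ω ∂P, 0 ≤ CV i ω := by
      have hnn : (0:Ω → ℝ) ≤ᵐ[P] P[fun ω => (D i ω)^2 | F (i-1)] :=
        condExp_nonneg (Eventually.of_forall fun ω => sq_nonneg _)
      filter_upwards [hnn, hCVD] with ω w1 w2
      rw [w2]
      exact w1
    set q : Ω → ℝ := fun ω => Real.exp (-(c*L^2 * max (CV i ω) 0)) with hqdef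
    have hqM : StronglyMeasurable[F (i-1)] q :=
      (Real.measurable_exp.comp
        ((((hCVM i h1 hk).measurable.max measurable_const).const_mul (c*L^2)).neg)).stronglyMeasurable
    have hsplit : g i = q * φ := by
      funext ω
      show Real.exp (L * min (D i ω) γ - c*L^2 * max (CV i ω) 0)
        = Real.exp (-(c*L^2 * max (CV i ω) 0)) * Real.exp (L * min (D i ω) γ)
      rw [← Real.exp_add]
      congr 1
      ring
    have hpull : P[g i | F (i-1)] =ᵐ[P] q * P[φ | F (i-1)] := by
      rw [hsplit]
      exact condExp_mul_of_stronglyMeasurable_left hqM (hsplit ▸ hgInt i h1 hk) hφInt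
    filter_upwards [hpull, hmono, hlin, hmart0, hCVD, hCVnn] with ω w1 w2 w3 w4 w5 w6
    have w4' : (P[D i | F (i-1)]) ω = 0 := w4
    have hmax : max (CV i ω) 0 = CV i ω := max_eq_left w6
    have hφle : (P[φ | F (i-1)]) ω ≤ 1 + c*L^2 * CV i ω := by
      calc (P[φ | F (i-1)]) ω ≤ (P[ψ | F (i-1)]) ω := w2
      _ = 1 + L * (P[D i | F (i-1)]) ω + c*L^2 * (P[fun ω => (D i ω)^2 | F (i-1)]) ω := w3
      _ = 1 + c*L^2 * CV i ω := by rw [w4', ← w5]; ring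
    have hq : q ω = Real.exp (-(c*L^2 * CV i ω)) := by
      show Real.exp (-(c*L^2 * max (CV i ω) 0)) = _
      rw [hmax]
    rw [w1]
    show q ω * (P[φ | F (i-1)]) ω ≤ 1
    calc q ω * (P[φ | F (i-1)]) ω ≤ q ω * (1 + c*L^2 * CV i ω) :=
        mul_le_mul_of_nonneg_left hφle (Real.exp_pos _).le
    _ ≤ Real.exp (-(c*L^2 * CV i ω)) * Real.exp (c*L^2 * CV i ω) := by
        rw [hq]
        refine mul_le_mul_of_nonneg_left ?_ (Real.exp_pos _).le
        linarith [Real.add_one_le_exp (c*L^2 * CV i ω)]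
    _ = 1 := by rw [← Real.exp_add]; simp
  -- induction on partial products
  have hXM : ∀ n ≤ k, StronglyMeasurable[F n] (fun ω => ∏ i ∈ Finset.Icc 1 n, g i ω) := by
    intro n hn
    apply Finset.stronglyMeasurable_fun_prod
    intro i hi
    rw [Finset.mem_Icc] at hi
    exact (hgM i hi.1 (hi.2.trans hn)).mono (hFmono i n hi.2 hn)
  have hXnonneg : ∀ n, ∀ ω : Ω, 0 ≤ ∏ i ∈ Finset.Icc 1 n, g i ω :=
    fun n ω => Finset.prod_nonneg fun i _ => (hgpos i ω).le
  have hXle : ∀ n, ∀ ω : Ω, ∏ i ∈ Finset.Icc 1 n, g i ω ≤ Real.exp (L*γ) ^ n := by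
    intro n ω
    calc ∏ i ∈ Finset.Icc 1 n, g i ω ≤ ∏ _i ∈ Finset.Icc 1 n, Real.exp (L*γ) :=
      Finset.prod_le_prod (fun i _ => (hgpos i ω).le) (fun i _ => hgle i ω)
    _ = Real.exp (L*γ) ^ n := by rw [Finset.prod_const, Nat.card_Icc]; norm_num
  have hXInt : ∀ n ≤ k, Integrable (fun ω => ∏ i ∈ Finset.Icc 1 n, g i ω) P := by
    intro n hn
    refine Integrable.mono' (integrable_const (Real.exp (L*γ) ^ n))
      ((hXM n hn).mono (hFle n hn)).aestronglyMeasurable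
      (Eventually.of_forall fun ω => ?_)
    rw [Real.norm_eq_abs, abs_of_nonneg (hXnonneg n ω)]
    exact hXle n ω
  have hmain : ∀ n, n ≤ k → ∫ ω, (∏ i ∈ Finset.Icc 1 n, g i ω) ∂P ≤ 1 := by
    intro n
    induction n with
    | zero => intro _; simp
    | succ n ih =>
      intro hn1
      have hn : n ≤ k := le_trans (Nat.le_succ n) hn1
      have h1n : (1:ℕ) ≤ n + 1 := Nat.le_add_left 1 n
      have hGn : F n ≤ m0 := hFle n hn
      have hXM' := hXM n hn
      have hsucc : ∀ ω, ∏ i ∈ Finset.Icc 1 (n+1), g i ω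
          = (∏ i ∈ Finset.Icc 1 n, g i ω) * g (n+1) ω := by
        intro ω
        exact Finset.prod_Icc_succ_top h1n _
      have hstep' : (P[g (n+1) | F n]) ≤ᵐ[P] fun _ => (1:ℝ) := by
        have := hstep (n+1) h1n hn1
        simpa using this
      have hXgM : StronglyMeasurable[F (n+1)]
          (fun ω => (∏ i ∈ Finset.Icc 1 n, g i ω) * g (n+1) ω) :=
        (hXM'.mono (hFmono n (n+1) (Nat.le_succ n) hn1)).mul (hgM (n+1) h1n hn1)
      have hXgInt : Integrable (fun ω => (∏ i ∈ Finset.Icc 1 n, g i ω) * g (n+1) ω) P := by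
        refine Integrable.mono' (integrable_const (Real.exp (L*γ) ^ n * Real.exp (L*γ)))
          ((hXgM.mono (hFle (n+1) hn1)).aestronglyMeasurable)
          (Eventually.of_forall fun ω => ?_)
        rw [Real.norm_eq_abs, abs_of_nonneg (mul_nonneg (hXnonneg n ω) (hgpos (n+1) ω).le)]
        exact mul_le_mul (hXle n ω) (hgle (n+1) ω) (hgpos (n+1) ω).le (by positivity)
      have hpull : P[(fun ω => (∏ i ∈ Finset.Icc 1 n, g i ω) * g (n+1) ω) | F n]
          =ᵐ[P] (fun ω => ∏ i ∈ Finset.Icc 1 n, g i ω) * P[g (n+1) | F n] :=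
        condExp_mul_of_stronglyMeasurable_left hXM' hXgInt (hgInt (n+1) h1n hn1)
      calc ∫ ω, (∏ i ∈ Finset.Icc 1 (n+1), g i ω) ∂P
          = ∫ ω, (∏ i ∈ Finset.Icc 1 n, g i ω) * g (n+1) ω ∂P :=
            integral_congr_ae (Eventually.of_forall hsucc)
      _ = ∫ ω, (P[(fun ω => (∏ i ∈ Finset.Icc 1 n, g i ω) * g (n+1) ω) | F n]) ω ∂P :=
            (integral_condExp hGn).symm
      _ ≤ ∫ ω, (∏ i ∈ Finset.Icc 1 n, g i ω) ∂P := by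
            apply integral_mono_ae integrable_condExp (hXInt n hn)
            filter_upwards [hpull, hstep'] with ω w1 w2
            rw [w1, Pi.mul_apply]
            have w2' : (P[g (n+1) | F n]) ω ≤ 1 := w2
            calc (∏ i ∈ Finset.Icc 1 n, g i ω) * (P[g (n+1) | F n]) ω
                ≤ (∏ i ∈ Finset.Icc 1 n, g i ω) * 1 :=
                  mul_le_mul_of_nonneg_left w2' (hXnonneg n ω)
            _ = ∏ i ∈ Finset.Icc 1 n, g i ω := mul_one _
      _ ≤ 1 := ih hn
  -- the good set
  set T : Set Ω := {ω | m ≤ Zi k ω - μ} ∩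
      ({ω | ∑ i ∈ Finset.Icc 1 k, CV i ω ≤ δ} ∩
       {ω | ∀ i, 1 ≤ i → i ≤ k → |Zi i ω - Zi (i-1) ω| ≤ γ}) with hTdef
  set G0 : Set Ω := {ω | ∀ i ∈ Finset.Icc 1 k, 0 ≤ CV i ω} with hG0def
  have hCVnn : ∀ i, 1 ≤ i → i ≤ k → ∀ᵐ ω ∂P, 0 ≤ CV i ω := by
    intro i a b
    have hnn : (0:Ω → ℝ) ≤ᵐ[P] P[fun ω => (D i ω)^2 | F (i-1)] :=
      condExp_nonneg (Eventually.of_forall fun ω => sq_nonneg _)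
    have hCVD : CV i =ᵐ[P] P[fun ω => (D i ω)^2 | F (i-1)] := hCVeq i a b
    filter_upwards [hnn, hCVD] with ω w1 w2
    rw [w2]
    exact w1
  have hG0ae : ∀ᵐ ω ∂P, ω ∈ G0 := by
    have : ∀ᵐ ω ∂P, ∀ i : ℕ, i ∈ Finset.Icc 1 k → 0 ≤ CV i ω := by
      rw [ae_all_iff]
      intro i
      by_cases hi : i ∈ Finset.Icc 1 k
      · rw [Finset.mem_Icc] at hi
        filter_upwards [hCVnn i hi.1 hi.2] with ω w _
        exact w
      · exact Eventually.of_forall fun ω h => absurd h hi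
    exact this
  have hZiMeas : ∀ i ≤ k, Measurable (Zi i) :=
    fun i hi => ((hZiM i hi).mono (hFle i hi)).measurable
  have hCVmeas : ∀ i, 1 ≤ i → i ≤ k → Measurable (CV i) :=
    fun i a b => ((hCVM i a b).mono (hFle _ (le_trans (Nat.sub_le i 1) b))).measurable
  have hTmeas : MeasurableSet (T ∩ G0) := by
    have h1 : MeasurableSet {ω | m ≤ Zi k ω - μ} :=
      measurableSet_le measurable_const ((hZiMeas k le_rfl).sub measurable_const)
    have h2 : MeasurableSet {ω | ∑ i ∈ Finset.Icc 1 k, CV i ω ≤ δ} := by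
      apply measurableSet_le _ measurable_const
      apply Finset.measurable_sum
      intro i hi
      rw [Finset.mem_Icc] at hi
      exact hCVmeas i hi.1 hi.2
    have h3 : MeasurableSet {ω | ∀ i, 1 ≤ i → i ≤ k → |Zi i ω - Zi (i-1) ω| ≤ γ} := by
      have he : {ω | ∀ i, 1 ≤ i → i ≤ k → |Zi i ω - Zi (i-1) ω| ≤ γ}
          = ⋂ i : ℕ, {ω | 1 ≤ i → i ≤ k → |Zi i ω - Zi (i-1) ω| ≤ γ} := by
        ext ω; simp
      rw [he]
      apply MeasurableSet.iInter
      intro i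
      by_cases hi : 1 ≤ i ∧ i ≤ k
      · have he2 : {ω | 1 ≤ i → i ≤ k → |Zi i ω - Zi (i-1) ω| ≤ γ}
            = {ω | |Zi i ω - Zi (i-1) ω| ≤ γ} := by
          ext ω; simp [hi.1, hi.2]
        rw [he2]
        exact measurableSet_le (((hZiMeas i hi.2).sub
          (hZiMeas (i-1) (le_trans (Nat.sub_le i 1) hi.2))).abs) measurable_const
      · have he2 : {ω | 1 ≤ i → i ≤ k → |Zi i ω - Zi (i-1) ω| ≤ γ} = Set.univ := by
          ext ω
          simp only [Set.mem_setOf_eq, Set.mem_univ, iff_true]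
          intro a b
          exact absurd ⟨a, b⟩ hi
        rw [he2]
        exact MeasurableSet.univ
    have h4 : MeasurableSet G0 := by
      have he : G0 = ⋂ i ∈ Finset.Icc 1 k, {ω | 0 ≤ CV i ω} := by
        ext ω; simp [hG0def]
      rw [he]
      apply MeasurableSet.biInter ((Finset.Icc 1 k) : Set ℕ).to_countable
      intro i hi
      rw [Finset.mem_coe, Finset.mem_Icc] at hi
      exact measurableSet_le measurable_const (hCVmeas i hi.1 hi.2)
    exact (h1.inter (h2.inter h3)).inter h4
  set tlb : ℝ := Real.exp (L*m - c*L^2*δ) with htdef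
  have hgood : ∀ ω ∈ T ∩ G0, tlb ≤ ∏ i ∈ Finset.Icc 1 k, g i ω := by
    rintro ω ⟨⟨w1, w2, w3⟩, w4⟩
    have hprod : ∏ i ∈ Finset.Icc 1 k, g i ω
        = Real.exp (∑ i ∈ Finset.Icc 1 k, (L * min (D i ω) γ - c*L^2 * max (CV i ω) 0)) := by
      rw [Real.exp_sum]
    rw [hprod]
    apply Real.exp_le_exp.2
    have hterm : ∀ i ∈ Finset.Icc 1 k,
        L * min (D i ω) γ - c*L^2 * max (CV i ω) 0 = L * D i ω - c*L^2 * CV i ω := by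
      intro i hi
      rw [Finset.mem_Icc] at hi
      rw [min_eq_left (abs_le.1 (w3 i hi.1 hi.2)).2,
        max_eq_left (w4 i (by rw [Finset.mem_Icc]; exact hi))]
    rw [Finset.sum_congr rfl hterm, Finset.sum_sub_distrib, ← Finset.mul_sum, ← Finset.mul_sum]
    have hsum : ∑ i ∈ Finset.Icc 1 k, D i ω = Zi k ω - μ := by
      have hts := sum_Icc_sub (fun i => Zi i ω) k
      rw [hZi0 ω] at hts
      exact hts
    rw [hsum]
    have e1 : L * m ≤ L * (Zi k ω - μ) := mul_le_mul_of_nonneg_left w1 hLpos.le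
    have e2 : c*L^2 * (∑ i ∈ Finset.Icc 1 k, CV i ω) ≤ c*L^2*δ :=
      mul_le_mul_of_nonneg_left w2 (by positivity)
    linarith
  have hTmeasure : P (T ∩ G0) ≤ ENNReal.ofReal (Real.exp (-(m^2)/(2*δ+2*γ*m/3))) := by
    have htpos : 0 < tlb := Real.exp_pos _
    have h1 : tlb * (P (T ∩ G0)).toReal ≤ 1 := by
      have e0 : tlb * (P (T ∩ G0)).toReal = ∫ _ω in T ∩ G0, tlb ∂P := by
        rw [setIntegral_const, smul_eq_mul, mul_comm]; rfl
      have s1 : ∫ _ω in T ∩ G0, tlb ∂P ≤ ∫ ω in T ∩ G0, (∏ i ∈ Finset.Icc 1 k, g i ω) ∂P :=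
        setIntegral_mono_on (integrableOn_const)
          ((hXInt k le_rfl).integrableOn) hTmeas hgood
      have s2 : ∫ ω in T ∩ G0, (∏ i ∈ Finset.Icc 1 k, g i ω) ∂P
          ≤ ∫ ω, (∏ i ∈ Finset.Icc 1 k, g i ω) ∂P :=
        setIntegral_le_integral (hXInt k le_rfl) (Eventually.of_forall fun ω => hXnonneg k ω)
      rw [e0]
      linarith [hmain k le_rfl]
    have h2 : (P (T ∩ G0)).toReal ≤ Real.exp (-(L*m - c*L^2*δ)) := by
      rw [Real.exp_neg, ← one_div, le_div_iff₀ htpos]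
      nlinarith [h1]
    have harith : -(L*m - c*L^2*δ) = -(m^2)/(2*δ+2*γ*m/3) := by
      have hd2 : (0:ℝ) < 2*δ+2*γ*m/3 := by nlinarith
      rw [hcdef, hLdef]
      have h9 : (3:ℝ) - 3*m/(3*δ+γ*m)*γ = 9*δ/(3*δ+γ*m) := by
        field_simp
        ring
      rw [h9]
      field_simp
      ring
    rw [← harith]
    calc P (T ∩ G0) = ENNReal.ofReal (P (T ∩ G0)).toReal :=
      (ENNReal.ofReal_toReal (measure_ne_top _ _)).symm
    _ ≤ ENNReal.ofReal (Real.exp (-(L*m - c*L^2*δ))) := ENNReal.ofReal_le_ofReal h2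
  calc P T ≤ P ((T ∩ G0) ∪ G0ᶜ) := measure_mono (fun ω hω => by
      by_cases h : ω ∈ G0
      · exact Or.inl ⟨hω, h⟩
      · exact Or.inr h)
  _ ≤ P (T ∩ G0) + P G0ᶜ := measure_union_le _ _
  _ = P (T ∩ G0) := by
      have hz : P G0ᶜ = 0 := by
        have := ae_iff.1 hG0ae
        exact this
      rw [hz, add_zero]
  _ ≤ _ := hTmeasure


end FreedmanAux

open FreedmanAux

theorem stmt1 {Ω : Type*} [m0 : MeasurableSpace Ω] (P : Measure Ω) [IsProbabilityMeasure P]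
    (k : ℕ) (F : ℕ → MeasurableSpace Ω)
    (hF0 : F 0 = ⊥) (hFmono : ∀ i j, i ≤ j → j ≤ k → F i ≤ F j)
    (hFle : ∀ i ≤ k, F i ≤ m0)
    (Z : Ω → ℝ) (hZmeas : Measurable[F k] Z) (hZ2 : MemLp Z 2 P)
    (Zi : ℕ → Ω → ℝ) (hZi : ∀ i ≤ k, Zi i = P[Z | F i])
    (CV : ℕ → Ω → ℝ)
    (hCV : ∀ i, 1 ≤ i → i ≤ k →
      CV i = P[(fun ω => (Zi i ω - (P[Zi i | F (i - 1)]) ω) ^ 2) | F (i - 1)])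
    (μ : ℝ) (hμ : μ = ∫ ω, Z ω ∂P)
    (m δ γ : ℝ) (hm : 0 ≤ m) (hδ : 0 ≤ δ) (hγ : 0 ≤ γ) :
    P ({ω | m ≤ |Z ω - μ|} ∩
        ({ω | ∑ i ∈ Finset.Icc 1 k, CV i ω ≤ δ} ∩
         {ω | ∀ i, 1 ≤ i → i ≤ k → |Zi i ω - Zi (i - 1) ω| ≤ γ}))
      ≤ ENNReal.ofReal (2 * Real.exp (-(m ^ 2) / (2 * δ + 2 * γ * m / 3)))
    ∧ ((∀ᵐ ω ∂P, ∑ i ∈ Finset.Icc 1 k, CV i ω ≤ δ) →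
       (∀ i, 1 ≤ i → i ≤ k → ∀ᵐ ω ∂P, |Zi i ω - Zi (i - 1) ω| ≤ γ) →
       P {ω | m ≤ |Z ω - μ|}
         ≤ ENNReal.ofReal (2 * Real.exp (-(m ^ 2) / (2 * δ + 2 * γ * m / 3)))) := by
  set A : Set Ω := {ω | ∑ i ∈ Finset.Icc 1 k, CV i ω ≤ δ} ∩
      {ω | ∀ i, 1 ≤ i → i ≤ k → |Zi i ω - Zi (i - 1) ω| ≤ γ} with hAdef
  have hZik : Zi k = Z := by
    rw [hZi k le_rfl]
    exact condExp_of_stronglyMeasurable (hFle k le_rfl) hZmeas.stronglyMeasurable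
      (hZ2.integrable one_le_two)
  have hZi0v : ∀ ω, Zi 0 ω = μ := by
    have hz : Zi 0 = fun _ => ∫ ω, Z ω ∂P := by
      rw [hZi 0 (Nat.zero_le k), hF0]
      exact condExp_bot Z
    intro ω
    rw [hz]
    exact hμ.symm
  have hZiM : ∀ i ≤ k, StronglyMeasurable[F i] (Zi i) := by
    intro i hi
    rw [hZi i hi]
    exact stronglyMeasurable_condExp
  have hZi2' : ∀ i ≤ k, MemLp (Zi i) 2 P := by
    intro i hi
    rw [hZi i hi]
    exact memℒp_two_condexp (hFle i hi) hZ2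
  have hmart : ∀ i, 1 ≤ i → i ≤ k → P[Zi i | F (i-1)] =ᵐ[P] Zi (i-1) := by
    intro i a b
    rw [hZi i b, hZi (i-1) (le_trans (Nat.sub_le i 1) b)]
    exact condExp_condExp_of_le (hFmono (i-1) i (Nat.sub_le i 1) b) (hFle i b)
  have hCVeq : ∀ i, 1 ≤ i → i ≤ k →
      CV i =ᵐ[P] P[(fun ω => (Zi i ω - Zi (i-1) ω)^2) | F (i-1)] := by
    intro i a b
    rw [hCV i a b]
    apply condExp_congr_ae
    filter_upwards [hmart i a b] with ω hω
    rw [hω]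
  have hCVM : ∀ i, 1 ≤ i → i ≤ k → StronglyMeasurable[F (i-1)] (CV i) := by
    intro i a b
    rw [hCV i a b]
    exact stronglyMeasurable_condExp
  have part1 : P ({ω | m ≤ |Z ω - μ|} ∩ A)
      ≤ ENNReal.ofReal (2 * Real.exp (-(m ^ 2) / (2 * δ + 2 * γ * m / 3))) := by
    have htriv : P ({ω | m ≤ |Z ω - μ|} ∩ A) ≤ ENNReal.ofReal 2 := by
      calc P ({ω | m ≤ |Z ω - μ|} ∩ A) ≤ 1 := prob_le_one
      _ ≤ ENNReal.ofReal 2 := by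
          rw [show (1 : ENNReal) = ENNReal.ofReal 1 by simp]
          exact ENNReal.ofReal_le_ofReal one_le_two
    rcases eq_or_lt_of_le hm with hm0 | hmpos
    · rw [← hm0]
      have e : -((0:ℝ) ^ 2) / (2 * δ + 2 * γ * 0 / 3) = 0 := by simp
      rw [e, Real.exp_zero, mul_one]
      exact le_trans prob_le_one (by
        rw [show (1:ENNReal) = ENNReal.ofReal 1 by simp]
        exact ENNReal.ofReal_le_ofReal one_le_two)
    by_cases hdg : δ = 0 ∧ γ = 0
    · rcases hdg with ⟨h1, h2⟩
      rw [h1, h2]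
      have e : -(m ^ 2) / (2 * 0 + 2 * 0 * m / 3) = 0 := by norm_num
      rw [e, Real.exp_zero, mul_one]
      exact le_trans prob_le_one (by
        rw [show (1:ENNReal) = ENNReal.ofReal 1 by simp]
        exact ENNReal.ofReal_le_ofReal one_le_two)
    have hD : 0 < 2*δ+2*γ*m/3 := by
      rcases (not_and_or.1 hdg) with h | h
      · have h' : 0 < δ := lt_of_le_of_ne hδ (Ne.symm h)
        nlinarith
      · have h' : 0 < γ := lt_of_le_of_ne hγ (Ne.symm h)
        nlinarith
    have key : ∀ ε : ℝ, 0 < ε →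
        P ({ω | m ≤ |Z ω - μ|} ∩ A)
          ≤ ENNReal.ofReal (2 * Real.exp (-(m ^ 2) / (2*(δ+ε) + 2*(γ+ε)*m/3))) := by
      intro ε hε
      have hδ' : 0 < δ + ε := by linarith
      have hγ' : 0 < γ + ε := by linarith
      have hmartneg : ∀ i, 1 ≤ i → i ≤ k →
          P[(fun i => fun ω => -(Zi i ω)) i | F (i-1)] =ᵐ[P] (fun i => fun ω => -(Zi i ω)) (i-1) := by
        intro i a b
        have h1 : P[(fun ω => -(Zi i ω)) | F (i-1)] =ᵐ[P] -P[Zi i | F (i-1)] := condExp_neg (Zi i) _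
        filter_upwards [h1, hmart i a b] with ω w1 w2
        show (P[(fun ω => -(Zi i ω)) | F (i-1)]) ω = -(Zi (i-1) ω)
        rw [w1, Pi.neg_apply, w2]
      have hCVeqneg : ∀ i, 1 ≤ i → i ≤ k →
          CV i =ᵐ[P] P[(fun ω => ((fun i => fun ω => -(Zi i ω)) i ω
            - (fun i => fun ω => -(Zi i ω)) (i-1) ω)^2) | F (i-1)] := by
        intro i a b
        have he : (fun ω => ((-(Zi i ω)) - (-(Zi (i-1) ω)))^2)
            = fun ω => (Zi i ω - Zi (i-1) ω)^2 := by
          funext ω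
          ring
        show CV i =ᵐ[P] P[(fun ω => ((-(Zi i ω)) - (-(Zi (i-1) ω)))^2) | F (i-1)]
        rw [he]
        exact hCVeq i a b
      have hpos := oneSided P k F hFmono hFle Zi hZiM hZi2' hmart CV hCVM hCVeq μ hZi0v
        m (δ+ε) (γ+ε) hmpos hδ' hγ'
      have hneg := oneSided P k F hFmono hFle (fun i => fun ω => -(Zi i ω))
        (fun i hi => (hZiM i hi).neg) (fun i hi => (hZi2' i hi).neg) hmartneg
        CV hCVM hCVeqneg (-μ) (fun ω => by show -(Zi 0 ω) = -μ; rw [hZi0v ω])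
        m (δ+ε) (γ+ε) hmpos hδ' hγ'
      beta_reduce at hneg
      have hincEq : {ω | ∀ i, 1 ≤ i → i ≤ k → |(-(Zi i ω)) - (-(Zi (i-1) ω))| ≤ γ+ε}
          = {ω | ∀ i, 1 ≤ i → i ≤ k → |Zi i ω - Zi (i-1) ω| ≤ γ+ε} := by
        ext ω
        have habs : ∀ a b : ℝ, |(-a) - (-b)| = |a - b| := by
          intro a b
          rw [← abs_neg]
          congr 1
          ring
        simp only [Set.mem_setOf_eq, habs]
      rw [hincEq] at hneg
      have hsplit : {ω | m ≤ |Z ω - μ|} ∩ A ⊆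
          ({ω | m ≤ Zi k ω - μ} ∩
            ({ω | ∑ i ∈ Finset.Icc 1 k, CV i ω ≤ δ+ε} ∩
             {ω | ∀ i, 1 ≤ i → i ≤ k → |Zi i ω - Zi (i-1) ω| ≤ γ+ε})) ∪
          ({ω | m ≤ -(Zi k ω) - -μ} ∩
            ({ω | ∑ i ∈ Finset.Icc 1 k, CV i ω ≤ δ+ε} ∩
             {ω | ∀ i, 1 ≤ i → i ≤ k → |Zi i ω - Zi (i-1) ω| ≤ γ+ε})) := by
        rintro ω ⟨w1, w2, w3⟩
        have w1' : m ≤ |Zi k ω - μ| := by rwa [hZik]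
        have hA' : ω ∈ {ω | ∑ i ∈ Finset.Icc 1 k, CV i ω ≤ δ+ε} ∩
            {ω | ∀ i, 1 ≤ i → i ≤ k → |Zi i ω - Zi (i-1) ω| ≤ γ+ε} := by
          constructor
          · show ∑ i ∈ Finset.Icc 1 k, CV i ω ≤ δ + ε
            have w2' : ∑ i ∈ Finset.Icc 1 k, CV i ω ≤ δ := w2
            linarith
          · intro i a b
            have w3' : |Zi i ω - Zi (i-1) ω| ≤ γ := w3 i a b
            show |Zi i ω - Zi (i-1) ω| ≤ γ + ε
            linarith
        rcases le_abs.1 w1' with h | h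
        · exact Or.inl ⟨h, hA'⟩
        · refine Or.inr ⟨by simp only [Set.mem_setOf_eq]; linarith, hA'⟩
      calc P ({ω | m ≤ |Z ω - μ|} ∩ A) ≤ _ := measure_mono hsplit
      _ ≤ _ := measure_union_le _ _
      _ ≤ ENNReal.ofReal (Real.exp (-(m^2)/(2*(δ+ε)+2*(γ+ε)*m/3)))
          + ENNReal.ofReal (Real.exp (-(m^2)/(2*(δ+ε)+2*(γ+ε)*m/3))) := add_le_add hpos hneg
      _ = ENNReal.ofReal (2 * Real.exp (-(m ^ 2) / (2*(δ+ε) + 2*(γ+ε)*m/3))) := by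
          rw [← ENNReal.ofReal_add (Real.exp_pos _).le (Real.exp_pos _).le]
          ring_nf
    have htend : Filter.Tendsto
        (fun ε : ℝ => ENNReal.ofReal (2 * Real.exp (-(m ^ 2) / (2*(δ+ε) + 2*(γ+ε)*m/3))))
        (nhdsWithin 0 (Set.Ioi 0))
        (nhds (ENNReal.ofReal (2 * Real.exp (-(m ^ 2) / (2*δ + 2*γ*m/3))))) := by
      apply Filter.Tendsto.mono_left _ nhdsWithin_le_nhds
      have hc : ContinuousAt (fun ε : ℝ => 2 * Real.exp (-(m ^ 2) / (2*(δ+ε) + 2*(γ+ε)*m/3))) 0 := by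
        apply ContinuousAt.mul continuousAt_const
        apply Real.continuous_exp.continuousAt.comp
        apply ContinuousAt.div continuousAt_const (by fun_prop)
        simpa using hD.ne'
      have := (ENNReal.continuous_ofReal.continuousAt).tendsto.comp hc.tendsto
      simpa [Function.comp_def] using this
    exact ge_of_tendsto htend (eventually_nhdsWithin_of_forall fun ε hε => key ε hε)
  refine ⟨part1, ?_⟩
  intro h1 h2
  have h2' : ∀ᵐ ω ∂P, ∀ i : ℕ, 1 ≤ i → i ≤ k → |Zi i ω - Zi (i-1) ω| ≤ γ := by
    rw [ae_all_iff]
    intro i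
    by_cases hi : 1 ≤ i ∧ i ≤ k
    · filter_upwards [h2 i hi.1 hi.2] with ω w a b
      exact w
    · exact Filter.Eventually.of_forall fun ω a b => absurd ⟨a, b⟩ hi
  have hA : ∀ᵐ ω ∂P, ω ∈ A := by
    filter_upwards [h1, h2'] with ω w1 w2
    exact ⟨w1, w2⟩
  calc P {ω | m ≤ |Z ω - μ|} ≤ P (({ω | m ≤ |Z ω - μ|} ∩ A) ∪ Aᶜ) :=
      measure_mono (fun ω hω => by
        by_cases h : ω ∈ A
        · exact Or.inl ⟨hω, h⟩
        · exact Or.inr h)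
  _ ≤ P ({ω | m ≤ |Z ω - μ|} ∩ A) + P Aᶜ := measure_union_le _ _
  _ = P ({ω | m ≤ |Z ω - μ|} ∩ A) := by
      have hz : P Aᶜ = 0 := by
        have := ae_iff.1 hA
        exact this
      rw [hz, add_zero]
  _ ≤ _ := part1
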